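/- The Kantorovich-Rubinstein distance between the uniform distribution on S_n and the uniform distribution on the set of n-cycles in S_n is at most (ln(n)+1)/n. -/

import Mathlib

open Equiv Finset

/-- The normalized Hamming distance on `Perm (Fin n)`. -/
noncomputable def hamming {n : ℕ} (σ τ : Equiv.Perm (Fin n)) : ℝ :=
  ((Finset.univ.filter fun i => σ i ≠ τ i).card : ℝ) / n

/-- `γ` is a coupling of the probability mass functions `μ` and `ν` on `S_n`. -/
def IsCoupling {n : ℕ} (γ : Equiv.Perm (Fin n) × Equiv.Perm (Fin n) → ℝ)
    (μ ν : Equiv.Perm (Fin n) → ℝ) : Prop :=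
  (∀ p, 0 ≤ γ p) ∧ (∀ σ, ∑ τ, γ (σ, τ) = μ σ) ∧ (∀ τ, ∑ σ, γ (σ, τ) = ν τ)

/-- The Kantorovich-Rubinstein distance between probability mass functions on
`S_n`, with respect to the normalized Hamming metric. -/
noncomputable def KR {n : ℕ} (μ ν : Equiv.Perm (Fin n) → ℝ) : ℝ :=
  sInf {c | ∃ γ, IsCoupling γ μ ν ∧ c = ∑ p, γ p * hamming p.1 p.2}

/-- The uniform probability mass function on a subset `A` of `S_n`. -/
noncomputable def unifOn {n : ℕ} (A : Set (Equiv.Perm (Fin n))) :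
    Equiv.Perm (Fin n) → ℝ :=
  A.indicator fun _ => ((A.ncard : ℝ))⁻¹

/-- The number of cycles of a permutation, counting fixed points as cycles. -/
noncomputable def cycleCount {n : ℕ} (σ : Equiv.Perm (Fin n)) : ℕ :=
  σ.cycleType.card + (Finset.univ.filter fun i => σ i = i).card

namespace KRaux

variable {n : ℕ}

/-- Record positions of the word `ρ 0, ρ 1, …`. -/
def Rset (ρ : Equiv.Perm (Fin n)) : Finset (Fin n) :=
  Finset.univ.filter fun i => ∀ j, j < i → ρ i < ρ j

lemma mem_Rset {ρ : Equiv.Perm (Fin n)} {i : Fin n} :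
    i ∈ Rset ρ ↔ ∀ j, j < i → ρ i < ρ j := by
  simp [Rset]

lemma val_zero_mem_Rset (ρ : Equiv.Perm (Fin n)) {i : Fin n} (h : i.val = 0) :
    i ∈ Rset ρ := by
  refine mem_Rset.2 fun j hj => absurd hj ?_
  simp [Fin.lt_def, h]

lemma Rset_anti {ρ : Equiv.Perm (Fin n)} {i j : Fin n}
    (hj : j ∈ Rset ρ) (hij : i < j) : ρ j < ρ i :=
  mem_Rset.1 hj i hij

lemma bs_nonempty (ρ : Equiv.Perm (Fin n)) (i : Fin n) :
    ((Rset ρ).filter (fun j => j ≤ i)).Nonempty := by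
  refine ⟨⟨0, i.pos⟩, Finset.mem_filter.2 ⟨val_zero_mem_Rset ρ rfl, ?_⟩⟩
  simpa [Fin.le_def] using Nat.zero_le i.val

/-- The start of the block (largest record position `≤ i`). -/
def bs (ρ : Equiv.Perm (Fin n)) (i : Fin n) : Fin n :=
  ((Rset ρ).filter (fun j => j ≤ i)).max' (bs_nonempty ρ i)

lemma bs_mem (ρ : Equiv.Perm (Fin n)) (i : Fin n) : bs ρ i ∈ Rset ρ := by
  have := Finset.max'_mem _ (bs_nonempty ρ i)
  exact (Finset.mem_filter.1 this).1

lemma bs_le (ρ : Equiv.Perm (Fin n)) (i : Fin n) : bs ρ i ≤ i := by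
  have := Finset.max'_mem _ (bs_nonempty ρ i)
  exact (Finset.mem_filter.1 this).2

lemma le_bs {ρ : Equiv.Perm (Fin n)} {j i : Fin n} (hj : j ∈ Rset ρ) (hji : j ≤ i) :
    j ≤ bs ρ i := by
  unfold bs
  apply Finset.le_max'
  simp only [Finset.mem_filter]
  exact ⟨hj, hji⟩

lemma bs_eq_self {ρ : Equiv.Perm (Fin n)} {i : Fin n} (hi : i ∈ Rset ρ) : bs ρ i = i :=
  le_antisymm (bs_le ρ i) (le_bs hi le_rfl)

lemma bs_succ {ρ : Equiv.Perm (Fin n)} {i : Fin n} (h1 : i.val + 1 < n)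
    (h2 : (⟨i.val + 1, h1⟩ : Fin n) ∉ Rset ρ) : bs ρ ⟨i.val + 1, h1⟩ = bs ρ i := by
  have hne : bs ρ ⟨i.val + 1, h1⟩ ≠ ⟨i.val + 1, h1⟩ := fun h => h2 (h ▸ bs_mem ρ _)
  have h3 : bs ρ ⟨i.val + 1, h1⟩ ≤ ⟨i.val + 1, h1⟩ := bs_le ρ _
  have h5 : (bs ρ ⟨i.val + 1, h1⟩).val ≠ i.val + 1 := fun hv => hne (Fin.ext hv)
  have h4 : bs ρ ⟨i.val + 1, h1⟩ ≤ i := by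
    rw [Fin.le_def] at h3 ⊢
    simp only [] at h3
    omega
  refine le_antisymm (le_bs (bs_mem ρ _) h4) (le_bs (bs_mem ρ i) ?_)
  refine le_trans (bs_le ρ i) ?_
  rw [Fin.le_def]
  simp only []
  omega

lemma end_unique {ρ : Equiv.Perm (Fin n)} {i j : Fin n} (hbs : bs ρ i = bs ρ j)
    (hi : ¬ i.val + 1 < n ∨ ∃ h : i.val + 1 < n, (⟨i.val + 1, h⟩ : Fin n) ∈ Rset ρ)
    (hj : ¬ j.val + 1 < n ∨ ∃ h : j.val + 1 < n, (⟨j.val + 1, h⟩ : Fin n) ∈ Rset ρ) :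
    i = j := by
  by_contra hne
  wlog hlt : i.val < j.val generalizing i j
  · refine this hbs.symm hj hi (Ne.symm hne) ?_
    have : i.val ≠ j.val := fun h => hne (Fin.ext h)
    omega
  rcases hi with h | ⟨h1, hrec⟩
  · exact h (by omega)
  have h2 : (⟨i.val + 1, h1⟩ : Fin n) ≤ bs ρ j := le_bs hrec (by rw [Fin.le_def]; simpa using hlt)
  rw [← hbs] at h2
  have h3 := bs_le ρ i
  rw [Fin.le_def] at h2 h3
  simp only [] at h2
  omega

/-- The block permutation (in index space): `i ↦ i+1` within a block,
block end ↦ block start. -/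
def bfun (ρ : Equiv.Perm (Fin n)) (i : Fin n) : Fin n :=
  if h : i.val + 1 < n then
    (if (⟨i.val + 1, h⟩ : Fin n) ∈ Rset ρ then bs ρ i else ⟨i.val + 1, h⟩)
  else bs ρ i

lemma bfun_injective (ρ : Equiv.Perm (Fin n)) : Function.Injective (bfun ρ) := by
  intro i j hij
  unfold bfun at hij
  by_cases hi : i.val + 1 < n <;> by_cases hj : j.val + 1 < n
  · rw [dif_pos hi, dif_pos hj] at hij
    split_ifs at hij with hri hrj hrj
    · exact end_unique hij (Or.inr ⟨hi, hri⟩) (Or.inr ⟨hj, hrj⟩)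
    · exact absurd (hij ▸ bs_mem ρ i) hrj
    · exact absurd (hij.symm ▸ bs_mem ρ j) hri
    · exact Fin.ext (by simpa [Fin.ext_iff] using hij)
  · rw [dif_pos hi, dif_neg hj] at hij
    split_ifs at hij with hri
    · exact end_unique hij (Or.inr ⟨hi, hri⟩) (Or.inl hj)
    · exact absurd (hij.symm ▸ bs_mem ρ j) (by simpa using hij ▸ ‹(⟨i.val + 1, hi⟩ : Fin n) ∉ Rset ρ›)
  · rw [dif_neg hi, dif_pos hj] at hij
    split_ifs at hij with hrj
    · exact end_unique hij (Or.inl hi) (Or.inr ⟨hj, hrj⟩)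
    · exact absurd (hij ▸ bs_mem ρ i) hrj
  · rw [dif_neg hi, dif_neg hj] at hij
    exact end_unique hij (Or.inl hi) (Or.inl hj)

/-- The block permutation as a permutation. -/
noncomputable def bp (ρ : Equiv.Perm (Fin n)) : Equiv.Perm (Fin n) :=
  Equiv.ofBijective (bfun ρ) (Finite.injective_iff_bijective.mp (bfun_injective ρ))

lemma bp_apply (ρ : Equiv.Perm (Fin n)) (i : Fin n) : bp ρ i = bfun ρ i := rfl

lemma bp_apply_succ {ρ : Equiv.Perm (Fin n)} {i : Fin n} (h1 : i.val + 1 < n)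
    (h2 : (⟨i.val + 1, h1⟩ : Fin n) ∉ Rset ρ) : bp ρ i = ⟨i.val + 1, h1⟩ := by
  simp [bp_apply, bfun, h1, h2]

lemma bp_apply_end {ρ : Equiv.Perm (Fin n)} {i : Fin n}
    (h : ¬ i.val + 1 < n ∨ ∃ h1 : i.val + 1 < n, (⟨i.val + 1, h1⟩ : Fin n) ∈ Rset ρ) :
    bp ρ i = bs ρ i := by
  rcases h with h | ⟨h1, h2⟩
  · simp [bp_apply, bfun, h]
  · simp [bp_apply, bfun, h1, h2]

lemma bs_bp (ρ : Equiv.Perm (Fin n)) (i : Fin n) : bs ρ (bp ρ i) = bs ρ i := by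
  by_cases h1 : i.val + 1 < n
  · by_cases h2 : (⟨i.val + 1, h1⟩ : Fin n) ∈ Rset ρ
    · rw [bp_apply_end (Or.inr ⟨h1, h2⟩)]
      exact bs_eq_self (bs_mem ρ i)
    · rw [bp_apply_succ h1 h2]
      exact bs_succ h1 h2
  · rw [bp_apply_end (Or.inl h1)]
    exact bs_eq_self (bs_mem ρ i)

lemma bs_bp_pow (ρ : Equiv.Perm (Fin n)) (k : ℕ) (i : Fin n) :
    bs ρ (((bp ρ) ^ k) i) = bs ρ i := by
  induction k with
  | zero => simp
  | succ k ih =>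
    rw [pow_succ', Equiv.Perm.mul_apply, bs_bp, ih]

lemma bp_reach {ρ : Equiv.Perm (Fin n)} :
    ∀ (d : ℕ) (i : Fin n), i.val = (bs ρ i).val + d → ((bp ρ) ^ d) (bs ρ i) = i := by
  intro d
  induction d with
  | zero =>
    intro i h
    rw [pow_zero, Equiv.Perm.one_apply]
    exact Fin.ext (by omega)
  | succ d ih =>
    intro i h
    have hpos : 0 < i.val := by omega
    have hi' : i.val - 1 < n := by omega
    set i' : Fin n := ⟨i.val - 1, hi'⟩ with hi'def
    have hsucc : i'.val + 1 < n := by simpa using (by omega : i.val - 1 + 1 < n)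
    have heq : (⟨i'.val + 1, hsucc⟩ : Fin n) = i := Fin.ext (by show i.val - 1 + 1 = i.val; omega)
    have hiR : i ∉ Rset ρ := by
      intro hR
      have := bs_eq_self hR
      rw [this] at h
      omega
    have hbs' : bs ρ i' = bs ρ i := by
      have := bs_succ hsucc (heq ▸ hiR)
      rw [heq] at this
      exact this.symm
    have hd : i'.val = (bs ρ i').val + d := by rw [hbs']; simp [hi'def]; omega
    have hstep : bp ρ i' = i := by
      rw [bp_apply_succ hsucc (heq ▸ hiR)]
      exact heq
    calc ((bp ρ) ^ (d + 1)) (bs ρ i) = bp ρ (((bp ρ) ^ d) (bs ρ i)) := by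
          rw [pow_succ', Equiv.Perm.mul_apply]
      _ = i := by rw [← hbs', ih i' hd, hstep]

lemma sameCycle_bp_iff {ρ : Equiv.Perm (Fin n)} {i j : Fin n} :
    Equiv.Perm.SameCycle (bp ρ) i j ↔ bs ρ i = bs ρ j := by
  constructor
  · intro h
    obtain ⟨k, _, hk⟩ := h.exists_pow_eq'
    rw [← hk, bs_bp_pow]
  · intro h
    have h1 : Equiv.Perm.SameCycle (bp ρ) (bs ρ i) i :=
      ⟨(i.val - (bs ρ i).val : ℕ), by
        rw [zpow_natCast]
        exact bp_reach _ i (by have := bs_le ρ i; rw [Fin.le_def] at this; omega)⟩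
    have h2 : Equiv.Perm.SameCycle (bp ρ) (bs ρ j) j :=
      ⟨(j.val - (bs ρ j).val : ℕ), by
        rw [zpow_natCast]
        exact bp_reach _ j (by have := bs_le ρ j; rw [Fin.le_def] at this; omega)⟩
    exact (h1.symm.trans (h ▸ h2))

lemma record_min {ρ : Equiv.Perm (Fin n)} {i : Fin n} (hi : i ∈ Rset ρ) :
    ∀ j, bs ρ j = i → ρ i ≤ ρ j := by
  intro j hj
  have hij : i ≤ j := hj ▸ bs_le ρ j
  by_contra hcon
  push_neg at hcon
  obtain ⟨l, hl, hmin⟩ := Finset.exists_min_image (Finset.Icc i j) ρ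
    ⟨i, Finset.mem_Icc.2 ⟨le_rfl, hij⟩⟩
  have hlj : l ≤ j := (Finset.mem_Icc.1 hl).2
  have hil : i ≤ l := (Finset.mem_Icc.1 hl).1
  have hρl : ρ l < ρ i := lt_of_le_of_lt (hmin j (Finset.mem_Icc.2 ⟨hij, le_rfl⟩)) hcon
  have hli : i < l := lt_of_le_of_ne hil (fun h => absurd (h ▸ hρl) (lt_irrefl _))
  have hlR : l ∈ Rset ρ := by
    refine mem_Rset.2 fun k hk => ?_
    rcases lt_or_ge k i with hki | hik
    · exact lt_trans hρl (Rset_anti hi hki)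
    · have hkmem : k ∈ Finset.Icc i j := Finset.mem_Icc.2 ⟨hik, le_trans (le_of_lt hk) hlj⟩
      refine lt_of_le_of_ne (hmin k hkmem) fun h => ?_
      exact absurd (ρ.injective h) (ne_of_lt hk).symm
  have := le_bs hlR hlj
  rw [hj] at this
  exact absurd this (not_le.2 hli)

lemma min_iff_record {ρ : Equiv.Perm (Fin n)} {i : Fin n} :
    (∀ j, bs ρ j = bs ρ i → ρ i ≤ ρ j) ↔ i ∈ Rset ρ := by
  constructor
  · intro h
    by_contra hR
    have h1 : bs ρ i ≠ i := fun he => hR (he ▸ bs_mem ρ i)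
    have h2 : ρ (bs ρ i) ≤ ρ i := record_min (bs_mem ρ i) i rfl
    have h3 : ρ (bs ρ i) ≠ ρ i := fun he => h1 (ρ.injective he)
    have h4 := h (bs ρ i) (bs_eq_self (bs_mem ρ i))
    exact h3 (le_antisymm h2 h4)
  · intro hR j hj
    rw [bs_eq_self hR] at hj
    exact record_min hR j hj

/-- The Foata map: the permutation whose cycles are the record blocks of the word `ρ`. -/
noncomputable def gp (ρ : Equiv.Perm (Fin n)) : Equiv.Perm (Fin n) := ρ * bp ρ * ρ⁻¹

/-- The `n`-cycle given by the word `ρ`. -/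
def Tp (ρ : Equiv.Perm (Fin n)) : Equiv.Perm (Fin n) := ρ * finRotate n * ρ⁻¹

lemma gp_apply (ρ : Equiv.Perm (Fin n)) (j : Fin n) : gp ρ (ρ j) = ρ (bp ρ j) := by
  simp [gp, Equiv.Perm.mul_apply]

lemma Tp_apply (ρ : Equiv.Perm (Fin n)) (j : Fin n) : Tp ρ (ρ j) = ρ (finRotate n j) := by
  simp [Tp, Equiv.Perm.mul_apply]

lemma sameCycle_gp_iff {ρ : Equiv.Perm (Fin n)} {x y : Fin n} :
    Equiv.Perm.SameCycle (gp ρ) x y ↔ bs ρ (ρ⁻¹ x) = bs ρ (ρ⁻¹ y) := by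
  rw [gp, Equiv.Perm.sameCycle_conj, sameCycle_bp_iff]

lemma min_orbit_iff {ρ : Equiv.Perm (Fin n)} {x : Fin n} :
    (∀ y, Equiv.Perm.SameCycle (gp ρ) x y → x ≤ y) ↔ ρ⁻¹ x ∈ Rset ρ := by
  rw [← min_iff_record]
  constructor
  · intro h j hj
    have := h (ρ j) (by rw [sameCycle_gp_iff]; simpa using hj.symm)
    simpa [Equiv.Perm.inv_def, Equiv.apply_symm_apply] using this
  · intro h y hy
    rw [sameCycle_gp_iff] at hy
    have := h (ρ⁻¹ y) hy.symm
    simpa [Equiv.Perm.inv_def, Equiv.apply_symm_apply] using this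

lemma gp_mixed_case {ρ1 ρ2 : Equiv.Perm (Fin n)} (h : gp ρ1 = gp ρ2) {i : Fin n}
    (h1 : i ∈ Rset ρ1) (h2 : i ∉ Rset ρ2)
    (IH' : ∀ j : Fin n, j < i → ρ1 j = ρ2 j) : False := by
  have hpos : 0 < i.val := by
    rcases Nat.eq_zero_or_pos i.val with h0 | h0
    · exact absurd (val_zero_mem_Rset ρ2 h0) h2
    · exact h0
  have hi' : i.val - 1 < n := by omega
  set i' : Fin n := ⟨i.val - 1, hi'⟩ with hi'def
  have hsucc : i'.val + 1 < n := by simp [hi'def]; omega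
  have heq : (⟨i'.val + 1, hsucc⟩ : Fin n) = i := Fin.ext (by simp [hi'def]; omega)
  have hi'lt : i' < i := by rw [Fin.lt_def]; simp [hi'def]; omega
  have e2 : gp ρ2 (ρ2 i') = ρ2 i := by
    rw [gp_apply, bp_apply_succ hsucc (heq ▸ h2), heq]
  have e1 : gp ρ1 (ρ1 i') = ρ1 (bs ρ1 i') := by
    rw [gp_apply, bp_apply_end (Or.inr ⟨hsucc, heq ▸ h1⟩)]
  have hk : bs ρ1 i' < i := lt_of_le_of_lt (bs_le ρ1 i') hi'lt
  have echain : ρ2 i = ρ2 (bs ρ1 i') := by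
    rw [← e2, ← IH' i' hi'lt, ← h, e1, IH' _ hk]
  exact absurd (ρ2.injective echain) (ne_of_lt hk).symm

lemma gp_injective : Function.Injective (gp : Equiv.Perm (Fin n) → Equiv.Perm (Fin n)) := by
  intro ρ1 ρ2 h
  have key : ∀ m : ℕ, ∀ i : Fin n, i.val = m → ρ1 i = ρ2 i := by
    intro m
    induction m using Nat.strong_induction_on with
    | _ m IH =>
      intro i him
      subst him
      have IH' : ∀ j : Fin n, j < i → ρ1 j = ρ2 j := fun j hj => IH j.val hj j rfl
      by_cases h1 : i ∈ Rset ρ1 <;> by_cases h2 : i ∈ Rset ρ2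
      · -- both records
        have hm1 : ∀ y, (gp ρ1).SameCycle (ρ1 i) y → ρ1 i ≤ y := by
          rw [min_orbit_iff]
          simpa using h1
        have hm2 : ∀ y, (gp ρ2).SameCycle (ρ2 i) y → ρ2 i ≤ y := by
          rw [min_orbit_iff]
          simpa using h2
        have hj2 : ρ2⁻¹ (ρ1 i) ∈ Rset ρ2 := by
          rw [← min_orbit_iff]
          intro y hy
          rw [← h] at hy
          exact hm1 y hy
        have hj1 : ρ1⁻¹ (ρ2 i) ∈ Rset ρ1 := by
          rw [← min_orbit_iff]
          intro y hy
          rw [h] at hy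
          exact hm2 y hy
        have hval : ρ2 (ρ2⁻¹ (ρ1 i)) = ρ1 i := Equiv.apply_symm_apply ρ2 (ρ1 i)
        have hval' : ρ1 (ρ1⁻¹ (ρ2 i)) = ρ2 i := Equiv.apply_symm_apply ρ1 (ρ2 i)
        rcases lt_trichotomy (ρ2⁻¹ (ρ1 i)) i with hlt | heq | hgt
        · exfalso
          have := (IH' _ hlt).trans hval
          exact absurd (ρ1.injective this) (ne_of_lt hlt)
        · rw [heq] at hval
          exact hval.symm
        · have hstrict1 : ρ1 i < ρ2 i := hval ▸ Rset_anti hj2 hgt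
          rcases lt_trichotomy (ρ1⁻¹ (ρ2 i)) i with h'lt | h'eq | h'gt
          · exfalso
            have := (IH' _ h'lt).symm.trans hval'
            exact absurd (ρ2.injective this) (ne_of_lt h'lt)
          · rw [h'eq] at hval'
            exact hval'
          · have hstrict2 : ρ2 i < ρ1 i := hval' ▸ Rset_anti hj1 h'gt
            exact absurd (lt_trans hstrict1 hstrict2) (lt_irrefl _)
      · exact absurd (gp_mixed_case h h1 h2 IH') id
      · exact absurd (gp_mixed_case h.symm h2 h1 (fun j hj => (IH' j hj).symm)) id
      · -- neither a record
        rcases Nat.eq_zero_or_pos i.val with h0 | h0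
        · exact absurd (val_zero_mem_Rset ρ1 h0) h1
        have hi' : i.val - 1 < n := by omega
        set i' : Fin n := ⟨i.val - 1, hi'⟩ with hi'def
        have hsucc : i'.val + 1 < n := by simp [hi'def]; omega
        have heq : (⟨i'.val + 1, hsucc⟩ : Fin n) = i := Fin.ext (by simp [hi'def]; omega)
        have hi'lt : i' < i := by rw [Fin.lt_def]; simp [hi'def]; omega
        have e1 : gp ρ1 (ρ1 i') = ρ1 i := by
          rw [gp_apply, bp_apply_succ hsucc (heq ▸ h1), heq]
        have e2 : gp ρ2 (ρ2 i') = ρ2 i := by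
          rw [gp_apply, bp_apply_succ hsucc (heq ▸ h2), heq]
        rw [← e1, ← e2, IH' i' hi'lt, h]
  exact Equiv.ext fun i => key i.val i rfl

lemma hamming_gp_Tp (ρ : Equiv.Perm (Fin n)) :
    hamming (gp ρ) (Tp ρ) ≤ ((Rset ρ).card : ℝ) / n := by
  unfold hamming
  cases n with
  | zero =>
    have : (Finset.univ.filter fun i => gp ρ i ≠ Tp ρ i) = ∅ := Finset.eq_empty_of_forall_notMem
      (fun x _ => x.elim0)
    simp [this]
  | succ m =>
    rw [div_le_div_iff_of_pos_right (by positivity), Nat.cast_le]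
    refine Finset.card_le_card_of_injOn (fun x => finRotate (m + 1) (ρ⁻¹ x)) ?_ ?_
    · intro x hx
      have hne : gp ρ x ≠ Tp ρ x := (Finset.mem_filter.1 hx).2
      set i := ρ⁻¹ x with hidef
      have hx' : x = ρ i := (Equiv.apply_symm_apply ρ x).symm
      rw [hx', gp_apply, Tp_apply] at hne
      have hne' : bp ρ i ≠ finRotate (m + 1) i := fun hc => hne (by rw [hc])
      rw [finRotate_succ_apply] at hne'
      show finRotate (m + 1) i ∈ Rset ρ
      rw [finRotate_succ_apply]
      by_cases hlt : i.val + 1 < m + 1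
      · have hv : (i + 1).val = i.val + 1 :=
          Fin.val_add_one_of_lt (by rw [Fin.lt_def]; simpa using hlt)
        have heq : (⟨i.val + 1, hlt⟩ : Fin (m + 1)) = i + 1 := Fin.ext (by simp [hv])
        by_contra hR
        exact hne' (by rw [bp_apply_succ hlt (heq ▸ hR), heq])
      · have him : i.val = m := by have := i.isLt; omega
        have hlast : i = Fin.last m := Fin.ext (by simpa using him)
        have : (i + 1).val = 0 := by rw [hlast]; simp
        exact val_zero_mem_Rset ρ this
    · intro a _ b _ hab
      exact ρ⁻¹.injective ((finRotate (m + 1)).injective hab)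

lemma Tp_isCycle (hn : 2 ≤ n) (ρ : Equiv.Perm (Fin n)) :
    (Tp ρ).IsCycle ∧ (Tp ρ).support.card = n := by
  obtain ⟨m, rfl⟩ : ∃ m, n = m + 2 := ⟨n - 2, by omega⟩
  constructor
  · exact Equiv.Perm.IsCycle.conj isCycle_finRotate
  · rw [Tp, Equiv.Perm.card_support_conj, support_finRotate, Finset.card_univ,
      Fintype.card_fin]

open Fin.NatCast in
lemma Tp_fiber_card (hn : 2 ≤ n) (τ : Equiv.Perm (Fin n)) (hτ : τ.IsCycle)
    (hs : τ.support.card = n) :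
    (Finset.univ.filter fun ρ => Tp ρ = τ).card = n := by
  obtain ⟨m, rfl⟩ : ∃ m, n = m + 2 := ⟨n - 2, by omega⟩
  have hrot : (finRotate (m + 2)).IsCycle := isCycle_finRotate
  have hconj : IsConj (finRotate (m + 2)) τ := hrot.isConj hτ
    (by rw [hs, support_finRotate, Finset.card_univ, Fintype.card_fin])
  obtain ⟨z, hz⟩ := isConj_iff.1 hconj
  have hcomm : ∀ k : Fin (m + 2),
      Equiv.addLeft k * finRotate (m + 2) = finRotate (m + 2) * Equiv.addLeft k := by
    intro k
    ext i
    simp [Equiv.Perm.mul_apply, finRotate_succ_apply, add_assoc]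
  have hpow : ∀ (v : ℕ) (x : Fin (m + 2)), ((finRotate (m + 2)) ^ v) x = x + (v : Fin (m + 2)) := by
    intro v
    induction v with
    | zero => simp
    | succ v ih =>
      intro x
      rw [pow_succ', Equiv.Perm.mul_apply, finRotate_succ_apply, ih]
      push_cast
      abel
  have huniv : ((Finset.univ : Finset (Fin (m + 2))).card) = m + 2 := by
    rw [Finset.card_univ, Fintype.card_fin]
  refine Eq.trans ?_ huniv
  refine Finset.card_bij' (fun ρ _ => (z⁻¹ * ρ) 0) (fun k _ => z * Equiv.addLeft k)
    (fun ρ _ => Finset.mem_univ _) ?_ ?_ ?_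
  · -- maps into the fiber
    intro k _
    refine Finset.mem_filter.2 ⟨Finset.mem_univ _, ?_⟩
    have h1 : Equiv.addLeft k * finRotate (m + 2) * (Equiv.addLeft k)⁻¹ = finRotate (m + 2) := by
      rw [hcomm, mul_inv_cancel_right]
    have h2 : Tp (z * Equiv.addLeft k)
        = z * (Equiv.addLeft k * finRotate (m + 2) * (Equiv.addLeft k)⁻¹) * z⁻¹ := by
      rw [Tp]
      group
    rw [h2, h1, hz]
  · -- left inverse
    intro ρ hρ
    have hTp : Tp ρ = τ := (Finset.mem_filter.1 hρ).2
    set u := z⁻¹ * ρ with hu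
    have huc : u * finRotate (m + 2) = finRotate (m + 2) * u := by
      have e1 : ρ * finRotate (m + 2) * ρ⁻¹ = z * finRotate (m + 2) * z⁻¹ := by
        rw [← Tp, hTp, ← hz]
      have := congrArg (fun w => z⁻¹ * w * ρ) e1
      simpa [mul_assoc, hu] using this
    have hux : ∀ i : Fin (m + 2), u i = u 0 + i := by
      intro i
      have h0 : ((finRotate (m + 2)) ^ i.val) 0 = i := by
        rw [hpow, zero_add, Fin.cast_val_eq_self]
      have hcp : u * (finRotate (m + 2)) ^ i.val = (finRotate (m + 2)) ^ i.val * u := by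
        have : Commute u (finRotate (m + 2)) := huc
        exact (this.pow_right i.val)
      have step1 : (u * (finRotate (m + 2)) ^ i.val) 0 = u i := by
        rw [Equiv.Perm.mul_apply, h0]
      have step2 : ((finRotate (m + 2)) ^ i.val) (u 0) = u 0 + i := by
        rw [hpow]
        simp
      rw [← step1, hcp, Equiv.Perm.mul_apply, step2]
    ext i
    have : (z * Equiv.addLeft ((z⁻¹ * ρ) 0)) i = z (u 0 + i) := by
      simp [Equiv.Perm.mul_apply, hu]
    rw [this, ← hux i]
    simp [hu, Equiv.Perm.mul_apply]
  · intro k _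
    simp [Equiv.Perm.mul_apply]

lemma record_count (i : Fin n) :
    (i.val + 1) * (Finset.univ.filter fun ρ : Equiv.Perm (Fin n) => i ∈ Rset ρ).card
      = n.factorial := by
  classical
  set P : Fin n → Finset (Equiv.Perm (Fin n)) :=
    fun j => Finset.univ.filter (fun ρ => ∀ k, k ≤ i → ρ j ≤ ρ k) with hP
  have hAP : (Finset.univ.filter fun ρ : Equiv.Perm (Fin n) => i ∈ Rset ρ) = P i := by
    ext ρ
    simp only [hP, Finset.mem_filter, Finset.mem_univ, true_and, mem_Rset]
    constructor
    · intro h k hk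
      rcases lt_or_eq_of_le hk with hlt | heqq
      · exact le_of_lt (h k hlt)
      · rw [heqq]
    · intro h j hj
      refine lt_of_le_of_ne (h j (le_of_lt hj)) fun he => ?_
      exact (ne_of_lt hj) (ρ.injective he).symm
  have hdisj : ∀ j1 ∈ Finset.Iic i, ∀ j2 ∈ Finset.Iic i, j1 ≠ j2 → Disjoint (P j1) (P j2) := by
    intro j1 hj1 j2 hj2 hne
    rw [Finset.disjoint_left]
    intro ρ hm1 hm2
    have h1 : ∀ k, k ≤ i → ρ j1 ≤ ρ k := (Finset.mem_filter.1 hm1).2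
    have h2 : ∀ k, k ≤ i → ρ j2 ≤ ρ k := (Finset.mem_filter.1 hm2).2
    have e1 := h1 j2 (Finset.mem_Iic.1 hj2)
    have e2 := h2 j1 (Finset.mem_Iic.1 hj1)
    exact hne (ρ.injective (le_antisymm e1 e2))
  have hcover : (Finset.univ : Finset (Equiv.Perm (Fin n))) = (Finset.Iic i).biUnion P := by
    ext ρ
    simp only [Finset.mem_univ, true_iff, Finset.mem_biUnion]
    obtain ⟨j, hj, hmin⟩ := Finset.exists_min_image (Finset.Iic i) ρ
      ⟨i, Finset.mem_Iic.2 le_rfl⟩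
    exact ⟨j, hj, Finset.mem_filter.2 ⟨Finset.mem_univ _,
      fun k hk => hmin k (Finset.mem_Iic.2 hk)⟩⟩
  have hswap_le : ∀ (j : Fin n), j ≤ i → ∀ k, k ≤ i → Equiv.swap j i k ≤ i := by
    intro j hj k hk
    rw [Equiv.swap_apply_def]
    split_ifs with h1 h2
    · exact le_rfl
    · exact hj
    · exact hk
  have hPcard : ∀ j, j ≤ i → (P j).card = (P i).card := by
    intro j hj
    refine Finset.card_bij' (fun ρ _ => ρ * Equiv.swap j i) (fun ρ _ => ρ * Equiv.swap j i)
      ?_ ?_ ?_ ?_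
    · intro ρ hρ
      have hcond : ∀ k, k ≤ i → ρ j ≤ ρ k := (Finset.mem_filter.1 hρ).2
      refine Finset.mem_filter.2 ⟨Finset.mem_univ _, fun k hk => ?_⟩
      have e1 : (ρ * Equiv.swap j i) i = ρ j := by simp [Equiv.Perm.mul_apply]
      have e2 : (ρ * Equiv.swap j i) k = ρ (Equiv.swap j i k) := rfl
      rw [e1, e2]
      exact hcond _ (hswap_le j hj k hk)
    · intro ρ hρ
      have hcond : ∀ k, k ≤ i → ρ i ≤ ρ k := (Finset.mem_filter.1 hρ).2
      refine Finset.mem_filter.2 ⟨Finset.mem_univ _, fun k hk => ?_⟩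
      have e1 : (ρ * Equiv.swap j i) j = ρ i := by simp [Equiv.Perm.mul_apply]
      have e2 : (ρ * Equiv.swap j i) k = ρ (Equiv.swap j i k) := rfl
      rw [e1, e2]
      exact hcond _ (hswap_le j hj k hk)
    · intro ρ _
      show ρ * Equiv.swap j i * Equiv.swap j i = ρ
      rw [mul_assoc, Equiv.swap_mul_self, mul_one]
    · intro ρ _
      show ρ * Equiv.swap j i * Equiv.swap j i = ρ
      rw [mul_assoc, Equiv.swap_mul_self, mul_one]
  have hfact : (Finset.univ : Finset (Equiv.Perm (Fin n))).card = n.factorial := by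
    rw [Finset.card_univ, Fintype.card_perm, Fintype.card_fin]
  rw [hAP]
  calc (i.val + 1) * (P i).card = (Finset.Iic i).card * (P i).card := by
        rw [Fin.card_Iic]
    _ = ∑ j ∈ Finset.Iic i, (P i).card := by rw [Finset.sum_const, smul_eq_mul]
    _ = ∑ j ∈ Finset.Iic i, (P j).card := by
        refine Finset.sum_congr rfl fun j hj => ?_
        exact (hPcard j (Finset.mem_Iic.1 hj)).symm
    _ = ((Finset.Iic i).biUnion P).card := (Finset.card_biUnion hdisj).symm
    _ = n.factorial := by rw [← hcover, hfact]

lemma sum_record_card :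
    ∑ ρ : Equiv.Perm (Fin n), ((Rset ρ).card : ℝ)
      = (n.factorial : ℝ) * (harmonic n : ℝ) := by
  classical
  have hswap : (∑ ρ : Equiv.Perm (Fin n), (Rset ρ).card)
      = ∑ i : Fin n, (Finset.univ.filter fun ρ : Equiv.Perm (Fin n) => i ∈ Rset ρ).card := by
    calc ∑ ρ : Equiv.Perm (Fin n), (Rset ρ).card
        = ∑ ρ : Equiv.Perm (Fin n), ∑ i : Fin n, if i ∈ Rset ρ then 1 else 0 := by
          refine Finset.sum_congr rfl fun ρ _ => ?_
          rw [Finset.sum_ite_mem, Finset.univ_inter, Finset.card_eq_sum_ones]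
      _ = ∑ i : Fin n, ∑ ρ : Equiv.Perm (Fin n), if i ∈ Rset ρ then 1 else 0 :=
          Finset.sum_comm
      _ = ∑ i : Fin n, (Finset.univ.filter fun ρ : Equiv.Perm (Fin n) => i ∈ Rset ρ).card := by
          exact Finset.sum_congr rfl fun i _ => (Finset.card_filter _ _).symm
  have hreal : ∀ i : Fin n,
      ((Finset.univ.filter fun ρ : Equiv.Perm (Fin n) => i ∈ Rset ρ).card : ℝ)
        = (n.factorial : ℝ) * ((i.val : ℝ) + 1)⁻¹ := by
    intro i
    have h1 := record_count i
    have h2 : ((i.val : ℝ) + 1)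
        * ((Finset.univ.filter fun ρ : Equiv.Perm (Fin n) => i ∈ Rset ρ).card : ℝ)
        = (n.factorial : ℝ) := by exact_mod_cast congrArg (Nat.cast (R := ℝ)) h1
    have hne : ((i.val : ℝ) + 1) ≠ 0 := by positivity
    field_simp
    linarith [h2]
  calc ∑ ρ : Equiv.Perm (Fin n), ((Rset ρ).card : ℝ)
      = ((∑ ρ : Equiv.Perm (Fin n), (Rset ρ).card : ℕ) : ℝ) := by rw [Nat.cast_sum]
    _ = ∑ i : Fin n, ((Finset.univ.filter fun ρ : Equiv.Perm (Fin n) => i ∈ Rset ρ).card : ℝ) := by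
        rw [hswap, Nat.cast_sum]
    _ = ∑ i : Fin n, (n.factorial : ℝ) * ((i.val : ℝ) + 1)⁻¹ :=
        Finset.sum_congr rfl fun i _ => hreal i
    _ = (n.factorial : ℝ) * ∑ i : Fin n, ((i.val : ℝ) + 1)⁻¹ := by rw [Finset.mul_sum]
    _ = (n.factorial : ℝ) * (harmonic n : ℝ) := by
        congr 1
        have hh : ((harmonic n : ℚ) : ℝ) = ∑ k ∈ Finset.range n, ((k : ℝ) + 1)⁻¹ := by
          rw [harmonic]
          push_cast
          rfl
        rw [hh, ← Fin.sum_univ_eq_sum_range (fun k => ((k : ℝ) + 1)⁻¹) n]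



lemma hamming_nonneg {σ τ : Equiv.Perm (Fin n)} : 0 ≤ hamming σ τ := by
  unfold hamming
  positivity

end KRaux

open KRaux in
/-- The Kantorovich-Rubinstein distance between the uniform distribution on
`S_n` and the uniform distribution on the set of `n`-cycles is at most
`(ln n + 1)/n`. -/
theorem stmt6 {n : ℕ} (hn : 1 ≤ n) :
    KR (unifOn (Set.univ : Set (Equiv.Perm (Fin n)))) (unifOn {τ | τ.IsCycle ∧ τ.support.card = n}) ≤
      (Real.log n + 1) / n := by
  classical
  rcases eq_or_lt_of_le hn with h1 | h2
  · -- n = 1 : there are no couplings at all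
    subst h1
    have hCempty : {τ : Equiv.Perm (Fin 1) | τ.IsCycle ∧ τ.support.card = 1} = ∅ := by
      ext τ
      simp only [Set.mem_setOf_eq, Set.mem_empty_iff_false, iff_false]
      rintro ⟨hc, hcard⟩
      have := hc.two_le_card_support
      omega
    have hempty : {c | ∃ γ, IsCoupling γ (unifOn (Set.univ : Set (Equiv.Perm (Fin 1))))
        (unifOn {τ : Equiv.Perm (Fin 1) | τ.IsCycle ∧ τ.support.card = 1})
        ∧ c = ∑ p, γ p * hamming p.1 p.2} = ∅ := by
      rw [Set.eq_empty_iff_forall_notMem]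
      rintro c ⟨γ, ⟨hpos, hrow, hcol⟩, -⟩
      have h1 : ∑ σ : Equiv.Perm (Fin 1), ∑ τ, γ (σ, τ) = 1 := by
        rw [Finset.sum_congr rfl fun σ _ => hrow σ]
        simp [unifOn, Set.ncard_univ, Nat.card_eq_fintype_card, Fintype.card_perm,
          Fintype.card_fin]
      have h2 : ∑ τ : Equiv.Perm (Fin 1), ∑ σ, γ (σ, τ) = 0 := by
        rw [Finset.sum_congr rfl fun τ _ => hcol τ]
        simp [hCempty, unifOn]
      rw [Finset.sum_comm] at h1
      rw [h1] at h2
      norm_num at h2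
    rw [KR, hempty, Real.sInf_empty]
    norm_num
  · -- n ≥ 2 : the Foata coupling
    have hge : 2 ≤ n := h2
    have hnpos : (0 : ℝ) < n := by
      have : 0 < n := by omega
      exact_mod_cast this
    have hfpos : (0 : ℝ) < (n.factorial : ℝ) := by exact_mod_cast n.factorial_pos
    set Cf : Finset (Equiv.Perm (Fin n)) :=
      Finset.univ.filter (fun τ => τ.IsCycle ∧ τ.support.card = n) with hCf
    have hCset : {τ : Equiv.Perm (Fin n) | τ.IsCycle ∧ τ.support.card = n} = ↑Cf := by
      ext τ
      simp [hCf]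
    have hTpmem : ∀ ρ : Equiv.Perm (Fin n), Tp ρ ∈ Cf := fun ρ =>
      Finset.mem_filter.2 ⟨Finset.mem_univ _, Tp_isCycle hge ρ⟩
    -- the number of n-cycles
    have hCcard : (n : ℝ) * (Cf.card : ℝ) = (n.factorial : ℝ) := by
      have h1 : (Finset.univ : Finset (Equiv.Perm (Fin n))).card
          = ∑ τ ∈ Cf, (Finset.univ.filter fun ρ => Tp ρ = τ).card :=
        Finset.card_eq_sum_card_fiberwise fun ρ _ => hTpmem ρ
      have h2 : ∀ τ ∈ Cf, (Finset.univ.filter fun ρ => Tp ρ = τ).card = n := by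
        intro τ hτ
        have hm := Finset.mem_filter.1 hτ
        exact Tp_fiber_card hge τ hm.2.1 hm.2.2
      have h3 : (Finset.univ : Finset (Equiv.Perm (Fin n))).card = Cf.card * n := by
        rw [h1, Finset.sum_congr rfl h2, Finset.sum_const, smul_eq_mul]
      rw [Finset.card_univ, Fintype.card_perm, Fintype.card_fin] at h3
      rw [mul_comm]
      exact_mod_cast h3.symm
    have hCpos : (0 : ℝ) < (Cf.card : ℝ) := by
      by_contra hc
      push_neg at hc
      have : (Cf.card : ℝ) = 0 := le_antisymm hc (by positivity)
      rw [this, mul_zero] at hCcard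
      exact absurd hCcard.symm (ne_of_gt hfpos)
    -- the coupling
    set γ : Equiv.Perm (Fin n) × Equiv.Perm (Fin n) → ℝ := fun p =>
      ((Finset.univ.filter fun ρ => gp ρ = p.1 ∧ Tp ρ = p.2).card : ℝ) / (n.factorial : ℝ)
      with hγ
    have hgbij : Function.Bijective (gp : Equiv.Perm (Fin n) → Equiv.Perm (Fin n)) :=
      Finite.injective_iff_bijective.mp gp_injective
    -- row marginals
    have hrow : ∀ σ, ∑ τ, γ (σ, τ) = unifOn (Set.univ : Set (Equiv.Perm (Fin n))) σ := by
      intro σ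
      have hfw : (Finset.univ.filter fun ρ => gp ρ = σ).card
          = ∑ τ : Equiv.Perm (Fin n),
              (Finset.univ.filter fun ρ => gp ρ = σ ∧ Tp ρ = τ).card := by
        rw [Finset.card_eq_sum_card_fiberwise
          (f := Tp) (t := Finset.univ) (fun ρ _ => Finset.mem_univ _)]
        refine Finset.sum_congr rfl fun τ _ => ?_
        rw [Finset.filter_filter]
      have hone : (Finset.univ.filter fun ρ => gp ρ = σ).card = 1 := by
        obtain ⟨ρ0, hρ0⟩ := hgbij.surjective σ
        rw [Finset.card_eq_one]
        refine ⟨ρ0, ?_⟩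
        ext ρ
        simp only [Finset.mem_filter, Finset.mem_univ, true_and, Finset.mem_singleton]
        constructor
        · intro h
          exact hgbij.injective (h.trans hρ0.symm)
        · rintro rfl
          exact hρ0
      have hμ : unifOn (Set.univ : Set (Equiv.Perm (Fin n))) σ = (n.factorial : ℝ)⁻¹ := by
        simp [unifOn, Set.ncard_univ, Nat.card_eq_fintype_card, Fintype.card_perm,
          Fintype.card_fin]
      rw [hμ]
      calc ∑ τ, γ (σ, τ)
          = (∑ τ : Equiv.Perm (Fin n),
              ((Finset.univ.filter fun ρ => gp ρ = σ ∧ Tp ρ = τ).card : ℝ)) / (n.factorial : ℝ) := by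
            rw [Finset.sum_div]
        _ = (((Finset.univ.filter fun ρ => gp ρ = σ).card : ℝ)) / (n.factorial : ℝ) := by
            rw [← Nat.cast_sum, ← hfw]
        _ = (n.factorial : ℝ)⁻¹ := by rw [hone, Nat.cast_one, one_div]
    -- column marginals
    have hcol : ∀ τ, ∑ σ, γ (σ, τ)
        = unifOn {τ : Equiv.Perm (Fin n) | τ.IsCycle ∧ τ.support.card = n} τ := by
      intro τ
      have hfw : (Finset.univ.filter fun ρ => Tp ρ = τ).card
          = ∑ σ : Equiv.Perm (Fin n),
              (Finset.univ.filter fun ρ => gp ρ = σ ∧ Tp ρ = τ).card := by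
        rw [Finset.card_eq_sum_card_fiberwise
          (f := gp) (t := Finset.univ) (fun ρ _ => Finset.mem_univ _)]
        refine Finset.sum_congr rfl fun σ _ => ?_
        rw [Finset.filter_filter]
        congr 1
        ext ρ
        simp only [Finset.mem_filter]
        tauto
      have hsum : ∑ σ, γ (σ, τ)
          = ((Finset.univ.filter fun ρ => Tp ρ = τ).card : ℝ) / (n.factorial : ℝ) := by
        calc ∑ σ, γ (σ, τ)
            = (∑ σ : Equiv.Perm (Fin n),
                ((Finset.univ.filter fun ρ => gp ρ = σ ∧ Tp ρ = τ).card : ℝ)) / (n.factorial : ℝ) := by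
              rw [Finset.sum_div]
          _ = _ := by rw [← Nat.cast_sum, ← hfw]
      by_cases hτC : τ ∈ Cf
      · have hν : unifOn {τ : Equiv.Perm (Fin n) | τ.IsCycle ∧ τ.support.card = n} τ
            = (Cf.card : ℝ)⁻¹ := by
          rw [unifOn, hCset, Set.indicator_of_mem (by exact_mod_cast hτC), Set.ncard_coe_finset]
        have hm := Finset.mem_filter.1 hτC
        rw [hsum, Tp_fiber_card hge τ hm.2.1 hm.2.2, hν]
        have hc0 : (Cf.card : ℝ) ≠ 0 := ne_of_gt hCpos
        have hf0 : (n.factorial : ℝ) ≠ 0 := ne_of_gt hfpos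
        field_simp
        linarith [hCcard]
      · have hν : unifOn {τ : Equiv.Perm (Fin n) | τ.IsCycle ∧ τ.support.card = n} τ = 0 := by
          rw [unifOn, hCset, Set.indicator_of_notMem (by exact_mod_cast hτC)]
        have hzero : (Finset.univ.filter fun ρ => Tp ρ = τ).card = 0 := by
          rw [Finset.card_eq_zero, Finset.filter_eq_empty_iff]
          intro ρ _ hTp
          exact hτC (hTp ▸ hTpmem ρ)
        rw [hsum, hzero, Nat.cast_zero, zero_div, hν]
    -- nonnegativity
    have hpos : ∀ p, 0 ≤ γ p := by
      intro p
      rw [hγ]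
      positivity
    -- the cost
    have hcard_ite : ∀ p : Equiv.Perm (Fin n) × Equiv.Perm (Fin n),
        (((Finset.univ.filter fun ρ => gp ρ = p.1 ∧ Tp ρ = p.2).card : ℕ) : ℝ)
          = ∑ ρ : Equiv.Perm (Fin n), if (gp ρ, Tp ρ) = p then (1 : ℝ) else 0 := by
      intro p
      rw [Finset.card_filter]
      push_cast
      refine Finset.sum_congr rfl fun ρ _ => ?_
      refine if_congr ?_ rfl rfl
      rw [Prod.ext_iff]
    have hcost : ∑ p : Equiv.Perm (Fin n) × Equiv.Perm (Fin n), γ p * hamming p.1 p.2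
        = (∑ ρ : Equiv.Perm (Fin n), hamming (gp ρ) (Tp ρ)) / (n.factorial : ℝ) := by
      calc ∑ p : Equiv.Perm (Fin n) × Equiv.Perm (Fin n), γ p * hamming p.1 p.2
          = ∑ p : Equiv.Perm (Fin n) × Equiv.Perm (Fin n), ∑ ρ : Equiv.Perm (Fin n),
              (if (gp ρ, Tp ρ) = p then (1 : ℝ) else 0)
                * (hamming p.1 p.2 / (n.factorial : ℝ)) := by
            refine Finset.sum_congr rfl fun p _ => ?_
            rw [← Finset.sum_mul, ← hcard_ite p, hγ]
            ring
        _ = ∑ ρ : Equiv.Perm (Fin n), ∑ p : Equiv.Perm (Fin n) × Equiv.Perm (Fin n),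
              (if (gp ρ, Tp ρ) = p then (1 : ℝ) else 0)
                * (hamming p.1 p.2 / (n.factorial : ℝ)) := Finset.sum_comm
        _ = ∑ ρ : Equiv.Perm (Fin n), hamming (gp ρ) (Tp ρ) / (n.factorial : ℝ) := by
            refine Finset.sum_congr rfl fun ρ _ => ?_
            simp only [ite_mul, one_mul, zero_mul]
            rw [Finset.sum_ite_eq]
            simp
        _ = (∑ ρ : Equiv.Perm (Fin n), hamming (gp ρ) (Tp ρ)) / (n.factorial : ℝ) := by
            rw [Finset.sum_div]
    -- cost bound
    have hbound : ∑ p : Equiv.Perm (Fin n) × Equiv.Perm (Fin n), γ p * hamming p.1 p.2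
        ≤ (Real.log n + 1) / n := by
      rw [hcost]
      have hstep1 : ∑ ρ : Equiv.Perm (Fin n), hamming (gp ρ) (Tp ρ)
          ≤ (n.factorial : ℝ) * (harmonic n : ℝ) / n := by
        calc ∑ ρ : Equiv.Perm (Fin n), hamming (gp ρ) (Tp ρ)
            ≤ ∑ ρ : Equiv.Perm (Fin n), ((Rset ρ).card : ℝ) / n :=
              Finset.sum_le_sum fun ρ _ => hamming_gp_Tp ρ
          _ = (∑ ρ : Equiv.Perm (Fin n), ((Rset ρ).card : ℝ)) / n := by rw [Finset.sum_div]
          _ = (n.factorial : ℝ) * (harmonic n : ℝ) / n := by rw [sum_record_card]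
      have hstep2 : (∑ ρ : Equiv.Perm (Fin n), hamming (gp ρ) (Tp ρ)) / (n.factorial : ℝ)
          ≤ (harmonic n : ℝ) / n := by
        rw [div_le_iff₀ hfpos]
        calc ∑ ρ : Equiv.Perm (Fin n), hamming (gp ρ) (Tp ρ)
            ≤ (n.factorial : ℝ) * (harmonic n : ℝ) / n := hstep1
          _ = (harmonic n : ℝ) / n * (n.factorial : ℝ) := by ring
      refine le_trans hstep2 ?_
      have hh := harmonic_le_one_add_log n
      rw [div_le_div_iff_of_pos_right hnpos]
      linarith [hh]
    -- conclude
    refine le_trans (csInf_le ?_ ?_) hbound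
    · refine ⟨0, fun c hc => ?_⟩
      obtain ⟨γ', ⟨hpos', -, -⟩, rfl⟩ := hc
      exact Finset.sum_nonneg fun p _ => mul_nonneg (hpos' p) hamming_nonneg
    · exact ⟨γ, ⟨hpos, hrow, hcol⟩, rfl⟩
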